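/- Let n ≥ 1 and let G'' be the signed graph with vertex set {v, b, v_1, …, v_n} in which {v_1, …, v_n} is a clique, v and b are each adjacent to every v_i, v and b are not adjacent, and every edge of G'' is negative. Then β(G'') ≥ pt(G'') + 1/2, where pt(G'') = n(n−1)/4 + n + (n+1)/4. -/

import Mathlib

/-- Sign convention: `true` = positive edge, `false` = negative edge.
An edge `e` is *consistent* with the partition `(A, Aᶜ)` of the vertex set if it is
positive when both endpoints lie on the same side and negative otherwise. -/
def SignConsistent {V : Type*} (sign : Sym2 V → Bool) (A : Set V) (e : Sym2 V) : Prop :=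
  ∀ u v : V, e = s(u, v) → (sign e = true ↔ (u ∈ A ↔ v ∈ A))

/-- The number of edges of the balanced subgraph induced by the partition `(A, Aᶜ)`. -/
noncomputable def balCount {V : Type*} (G : SimpleGraph V) (sign : Sym2 V → Bool)
    (A : Set V) : ℕ :=
  {e | e ∈ G.edgeSet ∧ SignConsistent sign A e}.ncard

/-- `beta G sign` = β(G): the maximum number of edges of a balanced subgraph of the
signed graph `(G, sign)`. -/
noncomputable def beta {V : Type*} (G : SimpleGraph V) (sign : Sym2 V → Bool) : ℕ :=
  sSup {n | ∃ A : Set V, n = balCount G sign A}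

/-- The Poljak–Turzík bound `pt G = m/2 + (n − t)/4`, where `m` is the number of edges,
`n` the number of vertices and `t` the number of connected components. -/
noncomputable def pt {V : Type*} (G : SimpleGraph V) : ℚ :=
  (G.edgeSet.ncard : ℚ) / 2 +
    ((Nat.card V : ℚ) - (Nat.card G.ConnectedComponent : ℚ)) / 4

/-- β of the signed subgraph induced on the vertex set `U`. -/
noncomputable def betaOn {V : Type*} (G : SimpleGraph V) (sign : Sym2 V → Bool)
    (U : Set V) : ℕ :=
  beta (G.induce U) (fun e => sign (Sym2.map Subtype.val e))

/-- `pt` of the subgraph induced on the vertex set `U`. -/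
noncomputable def ptOn {V : Type*} (G : SimpleGraph V) (U : Set V) : ℚ :=
  pt (G.induce U)

/-- The signed graph `(G, sign)` is balanced: some partition `(A, Aᶜ)` is consistent
with every edge. -/
def IsBalanced {V : Type*} (G : SimpleGraph V) (sign : Sym2 V → Bool) : Prop :=
  ∃ A : Set V, ∀ u v : V, G.Adj u v → (sign s(u, v) = true ↔ (u ∈ A ↔ v ∈ A))

/-- `a`, `b`, `c` form a positive triangle: all three edges exist and the number of
negative edges among them is even. -/
def PositiveTriangle {V : Type*} (G : SimpleGraph V) (sign : Sym2 V → Bool)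
    (a b c : V) : Prop :=
  G.Adj a b ∧ G.Adj b c ∧ G.Adj c a ∧
    Even ((if sign s(a, b) then 0 else 1) + (if sign s(b, c) then 0 else 1) +
      (if sign s(c, a) then 0 else 1))

/-- `X` is (the vertex set of) a connected component of `G − S`. -/
def IsCompOf {V : Type*} (G : SimpleGraph V) (S X : Set V) : Prop :=
  Disjoint X S ∧ (G.induce X).Connected ∧
    ∀ x ∈ X, ∀ y : V, G.Adj x y → y ∉ S → y ∈ X

/-- The neighborhood of a vertex set `X`. -/
def nbhd {V : Type*} (G : SimpleGraph V) (X : Set V) : Set V :=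
  {v | v ∉ X ∧ ∃ x ∈ X, G.Adj x v}
theorem stmt14 (n : ℕ) (hn : 1 ≤ n) :
    pt ((⊤ : SimpleGraph (Fin (n + 2))).deleteEdges {s((0 : Fin (n + 2)), 1)}) =
        (n : ℚ) * ((n : ℚ) - 1) / 4 + (n : ℚ) + ((n : ℚ) + 1) / 4 ∧
      (beta ((⊤ : SimpleGraph (Fin (n + 2))).deleteEdges {s((0 : Fin (n + 2)), 1)})
          (fun _ => false) : ℚ) ≥
        pt ((⊤ : SimpleGraph (Fin (n + 2))).deleteEdges {s((0 : Fin (n + 2)), 1)})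
          + 1 / 2 := by
  set G := (⊤ : SimpleGraph (Fin (n + 2))).deleteEdges {s((0 : Fin (n + 2)), 1)} with hG
  have h01 : (0 : Fin (n+2)) ≠ 1 := by
    simp [Fin.ext_iff]
  have hv0 : ((0 : Fin (n+2)) : ℕ) = 0 := rfl
  have hv1 : ((1 : Fin (n+2)) : ℕ) = 1 := by simp
  have hmem : s((0:Fin (n+2)),1) ∈ (⊤ : SimpleGraph (Fin (n+2))).edgeSet := by
    simp [h01]
  have htop : (⊤ : SimpleGraph (Fin (n+2))).edgeSet.ncard = (n+2).choose 2 := by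
    rw [Set.ncard_eq_toFinset_card']
    simpa [SimpleGraph.edgeFinset] using
      SimpleGraph.card_edgeFinset_top_eq_card_choose_two (V := Fin (n+2))
  have hE : G.edgeSet.ncard = (n+2).choose 2 - 1 := by
    rw [hG, SimpleGraph.edgeSet_deleteEdges,
      Set.ncard_diff_singleton_of_mem hmem, htop]
  have hq2 : ((n+2).choose 2) * 2 = (n+2)*(n+1) := by
    rw [Nat.choose_two_right]
    have h2 : (2 : ℕ) ∣ (n+2)*(n+1) := by
      rw [mul_comm]
      exact (Nat.even_mul_succ_self (n+1)).two_dvd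
    have h3 : n + 2 - 1 = n + 1 := by omega
    rw [h3]
    exact Nat.div_mul_cancel h2
  have hpos : 1 ≤ (n+2).choose 2 := Nat.choose_pos (by omega)
  have hEQ : (G.edgeSet.ncard : ℚ) = ((n:ℚ)*(n:ℚ) + 3*(n:ℚ))/2 := by
    rw [hE, Nat.cast_sub hpos]
    have h1 : (((n+2).choose 2 : ℕ) : ℚ) = ((n:ℚ)+2)*((n:ℚ)+1)/2 := by
      field_simp
      exact_mod_cast hq2
    rw [h1]; push_cast; ring
  -- connectedness
  have hadj : ∀ a b : Fin (n+2), a ≠ b → s(a,b) ≠ s((0:Fin (n+2)),1) → G.Adj a b := by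
    intro a b h1 h2
    rw [hG]
    simp only [SimpleGraph.deleteEdges_adj, SimpleGraph.top_adj, Set.mem_singleton_iff]
    exact ⟨h1, h2⟩
  have hconn : G.Connected := by
    rw [SimpleGraph.connected_iff]
    refine ⟨?_, ⟨0⟩⟩
    intro u v
    by_cases huv : u = v
    · subst huv; exact SimpleGraph.Reachable.refl u
    by_cases hc : s(u,v) = s((0:Fin (n+2)),1)
    · have hw : ((u = 0 ∧ v = 1) ∨ (u = 1 ∧ v = 0)) := by
        rwa [Sym2.eq_iff] at hc
      set w : Fin (n+2) := ⟨2, by omega⟩ with hwdef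
      have hw0 : w ≠ 0 := by simp [hwdef, Fin.ext_iff]
      have hw1 : w ≠ 1 := by simp [hwdef, Fin.ext_iff]
      have key : ∀ x : Fin (n+2), (x = 0 ∨ x = 1) → G.Adj x w := by
        intro x hx
        apply hadj
        · rcases hx with h|h <;> subst h
          · exact fun h => hw0 h.symm
          · exact fun h => hw1 h.symm
        · intro hcon
          rw [Sym2.eq_iff] at hcon
          rcases hcon with ⟨h1,h2⟩|⟨h1,h2⟩
          · exact hw1 h2
          · exact hw0 h2
      have hu : u = 0 ∨ u = 1 := by tauto
      have hv : v = 0 ∨ v = 1 := by tauto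
      exact (key u hu).reachable.trans (key v hv).symm.reachable
    · exact (hadj u v huv hc).reachable
  have hcomp : Nat.card G.ConnectedComponent = 1 := by
    rw [Nat.card_eq_one_iff_unique]
    constructor
    · constructor
      intro a b
      refine SimpleGraph.ConnectedComponent.ind₂ ?_ a b
      intro v w
      exact SimpleGraph.ConnectedComponent.sound (hconn.preconnected v w)
    · exact ⟨G.connectedComponentMk 0⟩
  have hpt : pt G = (n : ℚ) * ((n : ℚ) - 1) / 4 + (n : ℚ) + ((n : ℚ) + 1) / 4 := by
    rw [pt, hEQ, hcomp, Nat.card_eq_fintype_card, Fintype.card_fin]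
    push_cast
    ring
  refine ⟨hpt, ?_⟩
  -- the cut
  set k : ℕ := (n+3)/2 with hk
  have hk2 : 2 ≤ k := by omega
  have hkm : k ≤ n + 1 := by omega
  set A : Set (Fin (n+2)) := {x | (x : ℕ) < k} with hA
  have hcross : ∀ a b : Fin (n+2), (a:ℕ) < k → ¬((b:ℕ) < k) →
      s(a,b) ∈ G.edgeSet ∧ SignConsistent (fun _ => false) A s(a,b) := by
    intro a b ha hb
    constructor
    · rw [SimpleGraph.mem_edgeSet]
      apply hadj
      · intro h; subst h; exact hb ha
      · intro hcon
        rw [Sym2.eq_iff] at hcon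
        rcases hcon with ⟨h1,h2⟩|⟨h1,h2⟩
        · apply hb; rw [h2, hv1]; omega
        · apply hb; rw [h2, hv0]; omega
    · intro u v huv
      simp only [Bool.false_eq_true, false_iff]
      rw [Sym2.eq_iff] at huv
      rcases huv with ⟨h1,h2⟩|⟨h1,h2⟩ <;> subst h1 <;> subst h2 <;>
        simp [hA, ha, hb]
  have hfin : ({e | e ∈ G.edgeSet ∧ SignConsistent (fun _ => false) A e} :
      Set (Sym2 (Fin (n+2)))).Finite := Set.toFinite _
  set f : Fin k × Fin (n+2-k) → Sym2 (Fin (n+2)) :=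
    fun p => s((⟨p.1, by omega⟩ : Fin (n+2)), (⟨k + p.2, by omega⟩ : Fin (n+2))) with hf
  have hinj : Function.Injective f := by
    intro p q h
    rw [hf] at h
    simp only [Sym2.eq_iff, Fin.mk.injEq] at h
    have hp1 := p.1.isLt
    have hp2 := p.2.isLt
    have hq1 := q.1.isLt
    have hq2' := q.2.isLt
    have hh : (p.1 : ℕ) = q.1 ∧ (p.2 : ℕ) = q.2 := by omega
    exact Prod.ext (Fin.ext hh.1) (Fin.ext hh.2)
  have hcard : (Finset.image f Finset.univ).card = k * (n+2-k) := by
    rw [Finset.card_image_of_injective _ hinj, Finset.card_univ, Fintype.card_prod,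
      Fintype.card_fin, Fintype.card_fin]
  have hsub : (↑(Finset.image f Finset.univ) : Set (Sym2 (Fin (n+2)))) ⊆
      {e | e ∈ G.edgeSet ∧ SignConsistent (fun _ => false) A e} := by
    intro e he
    simp only [Finset.coe_image, Finset.coe_univ, Set.image_univ, Set.mem_range] at he
    obtain ⟨p, hp⟩ := he
    rw [← hp, hf]
    exact hcross _ _ (by simp) (by simp)
  have hbeta1 : k * (n+2-k) ≤ balCount G (fun _ => false) A := by
    rw [balCount, ← hcard, ← Set.ncard_coe_finset]
    exact Set.ncard_le_ncard hsub hfin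
  have hbdd : BddAbove {m | ∃ B : Set (Fin (n+2)), m = balCount G (fun _ => false) B} := by
    refine ⟨G.edgeSet.ncard, ?_⟩
    rintro x ⟨B, rfl⟩
    exact Set.ncard_le_ncard (fun e he => he.1) (Set.toFinite _)
  have hbeta : k * (n+2-k) ≤ beta G (fun _ => false) :=
    le_trans hbeta1 (le_csSup hbdd ⟨A, rfl⟩)
  have hnum : ((k * (n+2-k) : ℕ) : ℚ) ≥
      (n : ℚ) * ((n : ℚ) - 1) / 4 + (n : ℚ) + ((n : ℚ) + 1) / 4 + 1/2 := by
    rcases Nat.even_or_odd n with ⟨t, ht⟩ | ⟨t, ht⟩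
    · have h1 : k = t + 1 := by omega
      have h2 : n + 2 - k = t + 1 := by omega
      have h3 : (n : ℚ) = 2 * t := by
        have : (n : ℚ) = ((t + t : ℕ) : ℚ) := by exact_mod_cast congrArg Nat.cast ht
        rw [this]; push_cast; ring
      rw [h2, h1, h3]; push_cast; nlinarith [sq_nonneg ((t:ℚ))]
    · have h1 : k = t + 2 := by omega
      have h2 : n + 2 - k = t + 1 := by omega
      have h3 : (n : ℚ) = 2 * t + 1 := by
        have : (n : ℚ) = ((2*t + 1 : ℕ) : ℚ) := by exact_mod_cast congrArg Nat.cast ht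
        rw [this]; push_cast; ring
      rw [h2, h1, h3]; push_cast; nlinarith [sq_nonneg ((t:ℚ))]
  rw [hpt]
  have hfin2 : ((k * (n+2-k) : ℕ) : ℚ) ≤ (beta G (fun _ => false) : ℚ) := by
    exact_mod_cast hbeta
  linarith
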